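/- Let n ≥ 1 and let d : (Fin 4)^n → ℝ with d(0,0,…,0) = 1. Let Φ_D be the unique linear map on 2^n × 2^n complex matrices satisfying Φ_D(Σ_v) = d(v) • Σ_v for every v ∈ (Fin 4)^n. For w ∈ (Fin 4)^n set β_w = 4^{−n} ∑_{v ∈ (Fin 4)^n} (∏_{k=1}^n c(w_k, v_k)) d(v). Then Φ_D is completely positive if and only if β_w ≥ 0 for every w ∈ (Fin 4)^n. (These are the Algoet–Fujiwara conditions for n qubits.) -/

import Mathlib

open scoped ComplexOrder Matrix

/-- The Pauli matrices `σ_0, σ_1, σ_2, σ_3`. -/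
def pauli : Fin 4 → Matrix (Fin 2) (Fin 2) ℂ :=
  ![!![1, 0; 0, 1], !![0, 1; 1, 0], !![0, -Complex.I; Complex.I, 0], !![1, 0; 0, -1]]

/-- The `n`-fold Kronecker product `σ_{v 1} ⊗ ⋯ ⊗ σ_{v n}`, realized as a matrix indexed by
`Fin n → Fin 2` (which is canonically identified with `Fin (2 ^ n)`). -/
def pauliTensor {n : ℕ} (v : Fin n → Fin 4) : Matrix (Fin n → Fin 2) (Fin n → Fin 2) ℂ :=
  Matrix.of fun x y => ∏ k, pauli (v k) (x k) (y k)

/-- `c i j = 1` if `i = 0`, `j = 0` or `i = j`, and `c i j = -1` otherwise. -/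
def pauliSign (i j : Fin 4) : ℝ :=
  if i = 0 ∨ j = 0 ∨ i = j then 1 else -1

/-- `Φ` is completely positive: for every `m ≥ 1`, the map `id_m ⊗ Φ` (acting blockwise on
`m × m` block matrices with `ι × ι` blocks) maps positive semidefinite matrices to positive
semidefinite matrices. -/
def CompletelyPositive {ι : Type} [Fintype ι] [DecidableEq ι]
    (Φ : Matrix ι ι ℂ → Matrix ι ι ℂ) : Prop :=
  ∀ m : ℕ, 1 ≤ m → ∀ M : Matrix (Fin m × ι) (Fin m × ι) ℂ, M.PosSemidef →
    (Matrix.of fun p q : Fin m × ι =>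
      Φ (Matrix.of fun a b : ι => M (p.1, a) (q.1, b)) p.2 q.2).PosSemidef

namespace StmtAux

open Matrix

def pauliSignZ (i j : Fin 4) : ℤ :=
  if i = 0 ∨ j = 0 ∨ i = j then 1 else -1

lemma pauliSign_eq (i j : Fin 4) : pauliSign i j = (pauliSignZ i j : ℝ) := by
  unfold pauliSign pauliSignZ; split <;> norm_num

lemma F4Z : ∀ u v : Fin 4,
    ∑ w : Fin 4, pauliSignZ w u * pauliSignZ w v = if u = v then 4 else 0 := by decide

lemma F4 (u v : Fin 4) :
    ∑ w : Fin 4, pauliSign w u * pauliSign w v = if u = v then 4 else 0 := by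
  have := F4Z u v
  simp only [pauliSign_eq, ← Int.cast_mul, ← Int.cast_sum, this]
  split <;> norm_num

lemma F1 (i j : Fin 4) (a b : Fin 2) :
    ∑ x : Fin 2, ∑ y : Fin 2, pauli i a x * pauli j x y * pauli i y b
      = (pauliSign i j : ℂ) * pauli j a b := by
  fin_cases i <;> fin_cases j <;> fin_cases a <;> fin_cases b <;>
    simp [pauli, pauliSign, Fin.sum_univ_two]
lemma F2 (a b c e : Fin 2) :
    ∑ v : Fin 4, pauli v a b * pauli v c e = if a = e ∧ b = c then 2 else 0 := by
  fin_cases a <;> fin_cases b <;> fin_cases c <;> fin_cases e <;>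
    simp [pauli, Fin.sum_univ_four] <;> norm_num
lemma F3 (i : Fin 4) (a b : Fin 2) : star (pauli i a b) = pauli i b a := by
  fin_cases i <;> fin_cases a <;> fin_cases b <;> simp [pauli]

lemma F5 (i : Fin 4) (a b : Fin 2) :
    ∑ x : Fin 2, pauli i a x * pauli i x b = if a = b then 1 else 0 := by
  fin_cases i <;> fin_cases a <;> fin_cases b <;> simp [pauli, Fin.sum_univ_two]

lemma prodSum {n : ℕ} {α : Type*} [Fintype α] [DecidableEq α] (f : Fin n → α → ℂ) :
    ∏ k, ∑ j, f k j = ∑ v : Fin n → α, ∏ k, f k (v k) := by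
  rw [Finset.prod_univ_sum, Fintype.piFinset_univ]

lemma prodSumR {n : ℕ} {α : Type*} [Fintype α] [DecidableEq α] (f : Fin n → α → ℝ) :
    ∏ k, ∑ j, f k j = ∑ v : Fin n → α, ∏ k, f k (v k) := by
  rw [Finset.prod_univ_sum, Fintype.piFinset_univ]

lemma prod_ite {n : ℕ} {F : Type*} [CommMonoidWithZero F] (P : Fin n → Prop)
    [DecidablePred P] (c : F) :
    ∏ k, (if P k then c else 0) = if ∀ k, P k then c ^ n else 0 := by
  by_cases h : ∀ k, P k
  · simp [h, Finset.prod_const]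
  · rw [if_neg h]
    push_neg at h; obtain ⟨k, hk⟩ := h
    exact Finset.prod_eq_zero (Finset.mem_univ k) (by simp [hk])

lemma tensor_star {n : ℕ} (w : Fin n → Fin 4) (a b : Fin n → Fin 2) :
    star (pauliTensor w a b) = pauliTensor w b a := by
  simp only [pauliTensor, Matrix.of_apply, star_prod, F3]

set_option maxHeartbeats 1000000 in
lemma tensor_sq {n : ℕ} (v : Fin n → Fin 4) : pauliTensor v * pauliTensor v = 1 := by
  ext a b
  rw [Matrix.mul_apply]
  have h1 : ∀ x, pauliTensor v a x * pauliTensor v x b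
      = ∏ k, (pauli (v k) (a k) (x k) * pauli (v k) (x k) (b k)) := by
    intro x
    simp only [pauliTensor, Matrix.of_apply, ← Finset.prod_mul_distrib]
  have h2 := prodSum (fun k s => pauli (v k) (a k) s * pauli (v k) s (b k))
  rw [Finset.sum_congr rfl fun x _ => h1 x, ← h2]
  rw [Finset.prod_congr rfl fun k _ => F5 (v k) (a k) (b k), prod_ite]
  rw [Matrix.one_apply]
  simp [funext_iff]

variable {n : ℕ}

lemma tensor_mul3 (w v : Fin n → Fin 4) :
    pauliTensor w * pauliTensor v * pauliTensor w
      = ((∏ k, pauliSign (w k) (v k) : ℝ) : ℂ) • pauliTensor v := by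
  ext a b
  have hmm : (pauliTensor w * pauliTensor v * pauliTensor w) a b
      = ∑ y, ∑ x, pauliTensor w a x * pauliTensor v x y * pauliTensor w y b := by
    simp only [Matrix.mul_apply, Finset.sum_mul]
  have h1 : ∀ (x y : Fin n → Fin 2),
      pauliTensor w a x * pauliTensor v x y * pauliTensor w y b
      = ∏ k, (pauli (w k) (a k) (x k) * pauli (v k) (x k) (y k) * pauli (w k) (y k) (b k)) := by
    intro x y
    simp only [pauliTensor, Matrix.of_apply, ← Finset.prod_mul_distrib]
  have h2 : ∀ y : Fin n → Fin 2,
      ∑ x : Fin n → Fin 2,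
        ∏ k, (pauli (w k) (a k) (x k) * pauli (v k) (x k) (y k) * pauli (w k) (y k) (b k))
      = ∏ k, ∑ s : Fin 2, (pauli (w k) (a k) s * pauli (v k) s (y k) * pauli (w k) (y k) (b k)) :=
    fun y => (prodSum fun k s =>
      pauli (w k) (a k) s * pauli (v k) s (y k) * pauli (w k) (y k) (b k)).symm
  have h3 := prodSum fun k t =>
      ∑ s : Fin 2, (pauli (w k) (a k) s * pauli (v k) s t * pauli (w k) t (b k))
  rw [hmm]
  rw [Finset.sum_congr rfl fun y _ =>
    ((Finset.sum_congr rfl fun x _ => h1 x y).trans (h2 y)), ← h3]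
  have h4 : ∀ k, ∑ t : Fin 2, ∑ s : Fin 2,
      (pauli (w k) (a k) s * pauli (v k) s t * pauli (w k) t (b k))
      = (pauliSign (w k) (v k) : ℂ) * pauli (v k) (a k) (b k) := by
    intro k; rw [Finset.sum_comm]; exact F1 _ _ _ _
  rw [Finset.prod_congr rfl fun k _ => h4 k, Finset.prod_mul_distrib]
  push_cast
  simp only [Matrix.smul_apply, pauliTensor, Matrix.of_apply, smul_eq_mul]

lemma tensor_key (a b c e : Fin n → Fin 2) :
    ∑ v : Fin n → Fin 4, pauliTensor v c e * pauliTensor v a b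
      = if c = b ∧ e = a then (2:ℂ)^n else 0 := by
  have h1 : ∀ v : Fin n → Fin 4, pauliTensor v c e * pauliTensor v a b
      = ∏ k, (pauli (v k) (c k) (e k) * pauli (v k) (a k) (b k)) := by
    intro v; simp only [pauliTensor, Matrix.of_apply, ← Finset.prod_mul_distrib]
  have h2 := prodSum fun (k : Fin n) (i : Fin 4) => pauli i (c k) (e k) * pauli i (a k) (b k)
  rw [Finset.sum_congr rfl fun v _ => h1 v, ← h2]
  rw [Finset.prod_congr rfl fun k _ => F2 (c k) (e k) (a k) (b k)]
  rw [prod_ite]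
  congr 1
  simp [funext_iff, forall_and]

lemma tensor_expand (X : Matrix (Fin n → Fin 2) (Fin n → Fin 2) ℂ) :
    X = ((2:ℂ) ^ n)⁻¹ • ∑ v : Fin n → Fin 4,
        (Matrix.trace (pauliTensor v * X)) • pauliTensor v := by
  ext a b
  simp only [Matrix.smul_apply, Matrix.sum_apply, smul_eq_mul]
  have htr : ∀ v : Fin n → Fin 4,
      Matrix.trace (pauliTensor v * X) = ∑ c, ∑ e, pauliTensor v c e * X e c := by
    intro v; simp [Matrix.trace, Matrix.diag, Matrix.mul_apply]
  have hswap : ∑ v : Fin n → Fin 4, Matrix.trace (pauliTensor v * X) * pauliTensor v a b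
      = ∑ c, ∑ e, X e c * (∑ v : Fin n → Fin 4, pauliTensor v c e * pauliTensor v a b) := by
    simp only [htr, Finset.sum_mul, Finset.mul_sum]
    rw [Finset.sum_comm]
    refine Finset.sum_congr rfl fun c _ => ?_
    rw [Finset.sum_comm]
    refine Finset.sum_congr rfl fun e _ => Finset.sum_congr rfl fun v _ => by ring
  rw [hswap]
  simp only [tensor_key]
  rw [Finset.sum_eq_single b]
  · rw [Finset.sum_eq_single a]
    · rw [if_pos (show b = b ∧ a = a from ⟨rfl, rfl⟩)]
      have h2n : (2:ℂ)^n ≠ 0 := pow_ne_zero _ two_ne_zero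
      field_simp
    · intro e _ he; simp [he]
    · simp
  · intro c _ hc; simp [hc]
  · simp

lemma coeffR (d : (Fin n → Fin 4) → ℝ) (v : Fin n → Fin 4) :
    ∑ w : Fin n → Fin 4,
      ((∑ u, (∏ k, pauliSign (w k) (u k)) * d u) / 4 ^ n) * ∏ k, pauliSign (w k) (v k)
      = d v := by
  have h1 : ∀ u : Fin n → Fin 4,
      ∑ w : Fin n → Fin 4, (∏ k, pauliSign (w k) (u k)) * ∏ k, pauliSign (w k) (v k)
      = if u = v then (4:ℝ)^n else 0 := by
    intro u
    have hm : ∀ w : Fin n → Fin 4,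
        (∏ k, pauliSign (w k) (u k)) * ∏ k, pauliSign (w k) (v k)
        = ∏ k, (pauliSign (w k) (u k) * pauliSign (w k) (v k)) :=
      fun w => (Finset.prod_mul_distrib).symm
    have h2 := prodSumR (fun (k : Fin n) (i : Fin 4) => pauliSign i (u k) * pauliSign i (v k))
    rw [Finset.sum_congr rfl fun w _ => hm w, ← h2,
      Finset.prod_congr rfl fun k _ => F4 (u k) (v k), prod_ite]
    congr 1
    simp [funext_iff]
  have main : ∑ w : Fin n → Fin 4,
      (∑ u, (∏ k, pauliSign (w k) (u k)) * d u) * ∏ k, pauliSign (w k) (v k)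
      = d v * 4 ^ n := by
    calc ∑ w : Fin n → Fin 4, (∑ u, (∏ k, pauliSign (w k) (u k)) * d u) * ∏ k, pauliSign (w k) (v k)
        = ∑ u, d u * ∑ w : Fin n → Fin 4,
            (∏ k, pauliSign (w k) (u k)) * ∏ k, pauliSign (w k) (v k) := by
          simp only [Finset.sum_mul, Finset.mul_sum]
          rw [Finset.sum_comm]
          exact Finset.sum_congr rfl fun u _ => Finset.sum_congr rfl fun w _ => by ring
      _ = ∑ u, d u * (if u = v then (4:ℝ)^n else 0) := by
          exact Finset.sum_congr rfl fun u _ => by rw [h1 u]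
      _ = d v * 4 ^ n := by
          rw [Finset.sum_eq_single v] <;> simp +contextual
  calc ∑ w : Fin n → Fin 4,
      ((∑ u, (∏ k, pauliSign (w k) (u k)) * d u) / 4 ^ n) * ∏ k, pauliSign (w k) (v k)
      = (∑ w : Fin n → Fin 4,
          (∑ u, (∏ k, pauliSign (w k) (u k)) * d u) * ∏ k, pauliSign (w k) (v k)) / 4 ^ n := by
        have hst : ∀ w : Fin n → Fin 4,
            ((∑ u, (∏ k, pauliSign (w k) (u k)) * d u) / 4 ^ n) * ∏ k, pauliSign (w k) (v k)
            = ((∑ u, (∏ k, pauliSign (w k) (u k)) * d u) * ∏ k, pauliSign (w k) (v k)) / 4 ^ n :=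
          fun w => by ring
        rw [Finset.sum_congr rfl fun w _ => hst w, ← Finset.sum_div]
    _ = d v := by rw [main]; field_simp

/-- the β coefficients -/
noncomputable def beta (d : (Fin n → Fin 4) → ℝ) (w : Fin n → Fin 4) : ℝ :=
  (∑ v : Fin n → Fin 4, (∏ k, pauliSign (w k) (v k)) * d v) / 4 ^ n

lemma kraus (d : (Fin n → Fin 4) → ℝ)
    (Φ : Matrix (Fin n → Fin 2) (Fin n → Fin 2) ℂ →ₗ[ℂ]
         Matrix (Fin n → Fin 2) (Fin n → Fin 2) ℂ)
    (hΦ : ∀ v : Fin n → Fin 4, Φ (pauliTensor v) = d v • pauliTensor v)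
    (X : Matrix (Fin n → Fin 2) (Fin n → Fin 2) ℂ) :
    Φ X = ∑ w : Fin n → Fin 4,
      ((beta d w : ℝ) : ℂ) • (pauliTensor w * X * pauliTensor w) := by
  have hL : Φ X = ((2:ℂ) ^ n)⁻¹ • ∑ v : Fin n → Fin 4,
      (Matrix.trace (pauliTensor v * X)) • ((d v : ℝ) • pauliTensor v) := by
    conv_lhs => rw [tensor_expand X]
    rw [_root_.map_smul, map_sum]
    simp only [_root_.map_smul, hΦ]
  have hR : ∀ w : Fin n → Fin 4, pauliTensor w * X * pauliTensor w
      = ((2:ℂ) ^ n)⁻¹ • ∑ v : Fin n → Fin 4,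
          (Matrix.trace (pauliTensor v * X)) •
            (((∏ k, pauliSign (w k) (v k) : ℝ) : ℂ) • pauliTensor v) := by
    intro w
    conv_lhs => rw [tensor_expand X]
    simp only [Matrix.mul_smul, Matrix.smul_mul, Matrix.mul_sum, Matrix.sum_mul, tensor_mul3]
  rw [hL]
  rw [Finset.sum_congr rfl fun w _ => congrArg (fun M => ((beta d w : ℝ) : ℂ) • M) (hR w)]
  ext a b
  simp only [Matrix.smul_apply, Matrix.sum_apply, smul_eq_mul, Complex.real_smul]
  symm
  have hco : ∀ v : Fin n → Fin 4, ∑ w : Fin n → Fin 4,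
      ((beta d w : ℝ) : ℂ) * ((∏ k, pauliSign (w k) (v k) : ℝ) : ℂ) = ((d v : ℝ) : ℂ) := by
    intro v
    norm_cast
    unfold beta
    exact coeffR d v
  calc ∑ w : Fin n → Fin 4, ((beta d w : ℝ) : ℂ) * (((2:ℂ)^n)⁻¹ *
        ∑ v : Fin n → Fin 4, Matrix.trace (pauliTensor v * X) *
          (((∏ k, pauliSign (w k) (v k) : ℝ) : ℂ) * pauliTensor v a b))
      = ∑ v : Fin n → Fin 4, ∑ w : Fin n → Fin 4, ((beta d w : ℝ) : ℂ) * (((2:ℂ)^n)⁻¹ *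
          (Matrix.trace (pauliTensor v * X) *
            (((∏ k, pauliSign (w k) (v k) : ℝ) : ℂ) * pauliTensor v a b))) := by
        simp only [Finset.mul_sum]
        exact Finset.sum_comm
    _ = ∑ v : Fin n → Fin 4, (((2:ℂ)^n)⁻¹ * (Matrix.trace (pauliTensor v * X) * pauliTensor v a b)) *
          ∑ w : Fin n → Fin 4, ((beta d w : ℝ) : ℂ) * ((∏ k, pauliSign (w k) (v k) : ℝ) : ℂ) := by
        refine Finset.sum_congr rfl fun v _ => ?_
        rw [Finset.mul_sum]
        exact Finset.sum_congr rfl fun w _ => by ring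
    _ = ((2:ℂ)^n)⁻¹ * ∑ v : Fin n → Fin 4,
          Matrix.trace (pauliTensor v * X) * (((d v : ℝ) : ℂ) * pauliTensor v a b) := by
        rw [Finset.mul_sum]
        refine Finset.sum_congr rfl fun v _ => ?_
        rw [hco v]; ring

lemma psd_smul {ι : Type*} [Fintype ι] (c : ℝ) (hc : 0 ≤ c) {A : Matrix ι ι ℂ}
    (hA : A.PosSemidef) : (((c : ℝ) : ℂ) • A).PosSemidef := by
  refine Matrix.PosSemidef.of_dotProduct_mulVec_nonneg ?_ ?_
  · show _ᴴ = _
    rw [Matrix.conjTranspose_smul, Complex.star_def, Complex.conj_ofReal, hA.1.eq]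
  · intro x
    rw [Matrix.smul_mulVec, dotProduct_smul, smul_eq_mul]
    exact mul_nonneg (by exact_mod_cast Complex.zero_le_real.mpr hc) (hA.dotProduct_mulVec_nonneg x)

lemma psd_sum {ι α : Type*} [Fintype ι] [Fintype α] (f : α → Matrix ι ι ℂ)
    (h : ∀ a, (f a).PosSemidef) : (∑ a, f a).PosSemidef :=
  Finset.sum_induction f _ (fun _ _ ha hb => ha.add hb) Matrix.PosSemidef.zero
    (fun a _ => h a)

lemma rev (d : (Fin n → Fin 4) → ℝ)
    (Φ : Matrix (Fin n → Fin 2) (Fin n → Fin 2) ℂ →ₗ[ℂ]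
         Matrix (Fin n → Fin 2) (Fin n → Fin 2) ℂ)
    (hΦ : ∀ v : Fin n → Fin 4, Φ (pauliTensor v) = d v • pauliTensor v)
    (h : ∀ w, 0 ≤ beta d w) : CompletelyPositive Φ := by
  intro m _hm M hM
  set K : (Fin n → Fin 4) → Matrix (Fin m × (Fin n → Fin 2)) (Fin m × (Fin n → Fin 2)) ℂ :=
    fun w => Matrix.of fun p q => (if p.1 = q.1 then (1:ℂ) else 0) * pauliTensor w p.2 q.2
    with hKdef
  have hKapp : ∀ w (p q : Fin m × (Fin n → Fin 2)),
      K w p q = if p.1 = q.1 then pauliTensor w p.2 q.2 else 0 := by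
    intro w p q
    simp [hKdef, ite_mul]
  have hKM : ∀ w (p : Fin m × (Fin n → Fin 2)) (r : Fin m × (Fin n → Fin 2)),
      (K w * M) p r = ∑ x, pauliTensor w p.2 x * M (p.1, x) r := by
    intro w p r
    rw [Matrix.mul_apply, Fintype.sum_prod_type, Finset.sum_comm]
    simp only [hKapp, ite_mul, zero_mul, Finset.sum_ite_eq, Finset.mem_univ, if_true]
  have hK : ∀ w (p q : Fin m × (Fin n → Fin 2)), (K w * M * (K w)ᴴ) p q
      = ∑ y, (∑ x, pauliTensor w p.2 x * M (p.1, x) (q.1, y)) * pauliTensor w y q.2 := by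
    intro w p q
    rw [Matrix.mul_apply, Fintype.sum_prod_type, Finset.sum_comm]
    simp only [Matrix.conjTranspose_apply, hKapp, apply_ite (star : ℂ → ℂ), star_zero,
      tensor_star, mul_ite, mul_zero, Finset.sum_ite_eq, Finset.mem_univ, if_true]
    exact Finset.sum_congr rfl fun y _ => by rw [hKM]
  have hmain : (Matrix.of fun p q : Fin m × (Fin n → Fin 2) =>
      Φ (Matrix.of fun a b => M (p.1, a) (q.1, b)) p.2 q.2)
      = ∑ w : Fin n → Fin 4, ((beta d w : ℝ) : ℂ) • (K w * M * (K w)ᴴ) := by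
    ext p q
    rw [Matrix.of_apply, kraus d Φ hΦ]
    simp only [Matrix.sum_apply, Matrix.smul_apply, smul_eq_mul]
    refine Finset.sum_congr rfl fun w _ => ?_
    rw [hK w p q]
    congr 1
  rw [hmain]
  exact psd_sum _ fun w => psd_smul _ (h w) (hM.mul_mul_conjTranspose_same (K w))

lemma phi_eval (d : (Fin n → Fin 4) → ℝ)
    (Φ : Matrix (Fin n → Fin 2) (Fin n → Fin 2) ℂ →ₗ[ℂ]
         Matrix (Fin n → Fin 2) (Fin n → Fin 2) ℂ)
    (hΦ : ∀ v : Fin n → Fin 4, Φ (pauliTensor v) = d v • pauliTensor v)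
    (X : Matrix (Fin n → Fin 2) (Fin n → Fin 2) ℂ) :
    Φ X = ((2:ℂ) ^ n)⁻¹ • ∑ v : Fin n → Fin 4,
      (Matrix.trace (pauliTensor v * X)) • ((d v : ℝ) • pauliTensor v) := by
  conv_lhs => rw [tensor_expand X]
  rw [_root_.map_smul, map_sum]
  simp only [_root_.map_smul, hΦ]

lemma fwd (d : (Fin n → Fin 4) → ℝ)
    (Φ : Matrix (Fin n → Fin 2) (Fin n → Fin 2) ℂ →ₗ[ℂ]
         Matrix (Fin n → Fin 2) (Fin n → Fin 2) ℂ)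
    (hΦ : ∀ v : Fin n → Fin 4, Φ (pauliTensor v) = d v • pauliTensor v)
    (hCP : CompletelyPositive Φ) (w : Fin n → Fin 4) :
    0 ≤ (∑ v : Fin n → Fin 4, (∏ k, pauliSign (w k) (v k)) * d v) / 4 ^ n := by
  have hm : 1 ≤ 2 ^ n := Nat.one_le_two_pow
  set e : (Fin n → Fin 2) ≃ Fin (2 ^ n) := finFunctionFinEquiv with he
  set y : Fin (2 ^ n) × (Fin n → Fin 2) → ℂ :=
    fun pa => if pa.1 = e pa.2 then 1 else 0 with hy
  have hystar : ∀ pa, star (y pa) = y pa := by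
    intro pa; simp only [hy]; split <;> simp
  set M : Matrix (Fin (2 ^ n) × (Fin n → Fin 2)) (Fin (2 ^ n) × (Fin n → Fin 2)) ℂ :=
    Matrix.of fun p q => y p * y q with hM
  have hMpsd : M.PosSemidef := by
    refine Matrix.PosSemidef.of_dotProduct_mulVec_nonneg ?_ ?_
    · ext p q
      simp only [Matrix.conjTranspose_apply, hM, Matrix.of_apply, star_mul', hystar]
      ring
    · intro x
      have key : star x ⬝ᵥ M *ᵥ x
          = star (∑ q, y q * x q) * (∑ q, y q * x q) := by
        calc star x ⬝ᵥ M *ᵥ x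
            = ∑ p, ∑ q, (star (x p) * y p) * (y q * x q) := by
              simp only [dotProduct, Matrix.mulVec, dotProduct, hM,
                Matrix.of_apply, Pi.star_apply, Finset.mul_sum]
              exact Finset.sum_congr rfl fun p _ => Finset.sum_congr rfl fun q _ => by ring
          _ = (∑ p, star (x p) * y p) * (∑ q, y q * x q) := by
              rw [Finset.sum_mul_sum]
          _ = star (∑ q, y q * x q) * (∑ q, y q * x q) := by
              congr 1
              rw [star_sum]
              exact Finset.sum_congr rfl fun q _ => by rw [star_mul', hystar]; ring
      rw [key]
      exact star_mul_self_nonneg _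
  have hN := hCP (2 ^ n) hm M hMpsd
  set x : Fin (2 ^ n) × (Fin n → Fin 2) → ℂ :=
    fun pa => pauliTensor w pa.2 (e.symm pa.1) with hx
  have hq := hN.dotProduct_mulVec_nonneg x
  -- trace of pauliTensor v times block
  have htr : ∀ (v : Fin n → Fin 4) (p1 q1 : Fin (2 ^ n)),
      Matrix.trace (pauliTensor v * (Matrix.of fun a b => M (p1, a) (q1, b)))
        = pauliTensor v (e.symm q1) (e.symm p1) := by
    intro v p1 q1
    simp only [Matrix.trace, Matrix.diag, Matrix.mul_apply, Matrix.of_apply, hM, hy,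
      ← Equiv.symm_apply_eq, mul_ite, mul_one, mul_zero, ite_mul, zero_mul,
      Finset.sum_ite_eq, Finset.mem_univ, if_true]
    simp
  -- value of N entries
  have hNval : ∀ (p q : Fin (2 ^ n) × (Fin n → Fin 2)),
      (Matrix.of fun p q : Fin (2 ^ n) × (Fin n → Fin 2) =>
        Φ (Matrix.of fun a b => M (p.1, a) (q.1, b)) p.2 q.2) p q
      = ((2:ℂ) ^ n)⁻¹ * ∑ v : Fin n → Fin 4,
          pauliTensor v (e.symm q.1) (e.symm p.1) * (((d v : ℝ) : ℂ) * pauliTensor v p.2 q.2) := by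
    intro p q
    rw [Matrix.of_apply, phi_eval d Φ hΦ]
    simp only [Matrix.smul_apply, Matrix.sum_apply, smul_eq_mul, Complex.real_smul, htr]
  -- entrywise version of tensor_mul3
  have hmul3 : ∀ (v : Fin n → Fin 4) (i j : Fin n → Fin 2),
      ∑ a : Fin n → Fin 2, ∑ b : Fin n → Fin 2,
        pauliTensor w i a * (pauliTensor v a b * pauliTensor w b j)
        = ((∏ k, pauliSign (w k) (v k) : ℝ) : ℂ) * pauliTensor v i j := by
    intro v i j
    have h := congrArg (fun A : Matrix (Fin n → Fin 2) (Fin n → Fin 2) ℂ => A i j)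
      (tensor_mul3 w v)
    simp only [Matrix.mul_apply, Matrix.smul_apply, smul_eq_mul, Complex.real_smul,
      Finset.sum_mul] at h
    rw [← h, Finset.sum_comm]
    exact Finset.sum_congr rfl fun a _ => Finset.sum_congr rfl fun b _ => by ring
  have htrace2 : ∀ v : Fin n → Fin 4,
      ∑ i : Fin n → Fin 2, ∑ j : Fin n → Fin 2, pauliTensor v j i * pauliTensor v i j
        = (2:ℂ) ^ n := by
    intro v
    calc ∑ i : Fin n → Fin 2, ∑ j : Fin n → Fin 2, pauliTensor v j i * pauliTensor v i j
        = ∑ j : Fin n → Fin 2, ∑ i : Fin n → Fin 2, pauliTensor v j i * pauliTensor v i j :=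
          Finset.sum_comm
      _ = ∑ j : Fin n → Fin 2, (pauliTensor v * pauliTensor v) j j :=
          Finset.sum_congr rfl fun j _ => (Matrix.mul_apply).symm
      _ = ∑ j : Fin n → Fin 2, (1 : Matrix (Fin n → Fin 2) (Fin n → Fin 2) ℂ) j j := by
          rw [tensor_sq]
      _ = (2:ℂ) ^ n := by
          simp [Matrix.one_apply, Finset.card_univ]
  have h2n : (2:ℂ) ^ n ≠ 0 := pow_ne_zero _ two_ne_zero
  set T : (Fin n → Fin 4) → ℂ := fun v =>
    ∑ p : Fin (2 ^ n) × (Fin n → Fin 2), ∑ q : Fin (2 ^ n) × (Fin n → Fin 2),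
      pauliTensor v (e.symm q.1) (e.symm p.1) *
        (pauliTensor w (e.symm p.1) p.2 *
          (pauliTensor v p.2 q.2 * pauliTensor w q.2 (e.symm q.1))) with hTdef
  have hT : ∀ v : Fin n → Fin 4,
      T v = ((∏ k, pauliSign (w k) (v k) : ℝ) : ℂ) * (2:ℂ) ^ n := by
    intro v
    have inner : ∀ (i j : Fin n → Fin 2),
        ∑ a : Fin n → Fin 2, ∑ b : Fin n → Fin 2,
          pauliTensor v j i * (pauliTensor w i a * (pauliTensor v a b * pauliTensor w b j))
        = pauliTensor v j i *
            (((∏ k, pauliSign (w k) (v k) : ℝ) : ℂ) * pauliTensor v i j) := by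
      intro i j
      calc ∑ a : Fin n → Fin 2, ∑ b : Fin n → Fin 2,
            pauliTensor v j i * (pauliTensor w i a * (pauliTensor v a b * pauliTensor w b j))
          = pauliTensor v j i * ∑ a : Fin n → Fin 2, ∑ b : Fin n → Fin 2,
              pauliTensor w i a * (pauliTensor v a b * pauliTensor w b j) := by
            rw [Finset.mul_sum]
            refine Finset.sum_congr rfl fun a _ => ?_
            rw [Finset.mul_sum]
        _ = _ := by rw [hmul3 v i j]
    calc T v
        = ∑ p1 : Fin (2 ^ n), ∑ a : Fin n → Fin 2, ∑ q1 : Fin (2 ^ n), ∑ b : Fin n → Fin 2,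
            pauliTensor v (e.symm q1) (e.symm p1) *
              (pauliTensor w (e.symm p1) a *
                (pauliTensor v a b * pauliTensor w b (e.symm q1))) := by
          rw [hTdef]
          simp only [Fintype.sum_prod_type]
      _ = ∑ p1 : Fin (2 ^ n), ∑ q1 : Fin (2 ^ n), ∑ a : Fin n → Fin 2, ∑ b : Fin n → Fin 2,
            pauliTensor v (e.symm q1) (e.symm p1) *
              (pauliTensor w (e.symm p1) a *
                (pauliTensor v a b * pauliTensor w b (e.symm q1))) :=
          Finset.sum_congr rfl fun p1 _ => Finset.sum_comm
      _ = ∑ p1 : Fin (2 ^ n), ∑ q1 : Fin (2 ^ n),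
            pauliTensor v (e.symm q1) (e.symm p1) *
              (((∏ k, pauliSign (w k) (v k) : ℝ) : ℂ) *
                pauliTensor v (e.symm p1) (e.symm q1)) :=
          Finset.sum_congr rfl fun p1 _ => Finset.sum_congr rfl fun q1 _ =>
            inner (e.symm p1) (e.symm q1)
      _ = ∑ i : Fin n → Fin 2, ∑ j : Fin n → Fin 2,
            pauliTensor v j i *
              (((∏ k, pauliSign (w k) (v k) : ℝ) : ℂ) * pauliTensor v i j) := by
          refine Fintype.sum_bijective e.symm e.symm.bijective _ _ fun p1 => ?_
          exact Fintype.sum_bijective e.symm e.symm.bijective _ _ fun q1 => rfl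
      _ = ((∏ k, pauliSign (w k) (v k) : ℝ) : ℂ) *
            ∑ i : Fin n → Fin 2, ∑ j : Fin n → Fin 2, pauliTensor v j i * pauliTensor v i j := by
          rw [Finset.mul_sum]
          refine Finset.sum_congr rfl fun i _ => ?_
          rw [Finset.mul_sum]
          exact Finset.sum_congr rfl fun j _ => by ring
      _ = ((∏ k, pauliSign (w k) (v k) : ℝ) : ℂ) * (2:ℂ) ^ n := by rw [htrace2 v]
  set A : (Fin n → Fin 4) → (Fin (2 ^ n) × (Fin n → Fin 2)) →
      (Fin (2 ^ n) × (Fin n → Fin 2)) → ℂ := fun v p q =>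
    ((2:ℂ) ^ n)⁻¹ * (((d v : ℝ) : ℂ) *
      (pauliTensor v (e.symm q.1) (e.symm p.1) *
        (pauliTensor w (e.symm p.1) p.2 *
          (pauliTensor v p.2 q.2 * pauliTensor w q.2 (e.symm q.1))))) with hAdef
  have key : ∀ p q : Fin (2 ^ n) × (Fin n → Fin 2),
      star (x p) * ((Matrix.of fun p q : Fin (2 ^ n) × (Fin n → Fin 2) =>
          Φ (Matrix.of fun a b => M (p.1, a) (q.1, b)) p.2 q.2) p q * x q)
      = ∑ v : Fin n → Fin 4, A v p q := by
    intro p q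
    rw [hNval p q]
    have hsx : star (x p) = pauliTensor w (e.symm p.1) p.2 := tensor_star w p.2 (e.symm p.1)
    have hxq : x q = pauliTensor w q.2 (e.symm q.1) := rfl
    rw [hsx, hxq]
    simp only [Finset.mul_sum, Finset.sum_mul]
    exact Finset.sum_congr rfl fun v _ => by ring
  have hQ : star x ⬝ᵥ (Matrix.of fun p q : Fin (2 ^ n) × (Fin n → Fin 2) =>
      Φ (Matrix.of fun a b => M (p.1, a) (q.1, b)) p.2 q.2) *ᵥ x
      = ((∑ v : Fin n → Fin 4, (∏ k, pauliSign (w k) (v k)) * d v : ℝ) : ℂ) := by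
    calc star x ⬝ᵥ (Matrix.of fun p q : Fin (2 ^ n) × (Fin n → Fin 2) =>
        Φ (Matrix.of fun a b => M (p.1, a) (q.1, b)) p.2 q.2) *ᵥ x
        = ∑ p, ∑ q, star (x p) * ((Matrix.of fun p q : Fin (2 ^ n) × (Fin n → Fin 2) =>
            Φ (Matrix.of fun a b => M (p.1, a) (q.1, b)) p.2 q.2) p q * x q) := by
          simp only [dotProduct, Matrix.mulVec, Pi.star_apply, Finset.mul_sum]
      _ = ∑ p : Fin (2 ^ n) × (Fin n → Fin 2), ∑ q : Fin (2 ^ n) × (Fin n → Fin 2),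
            ∑ v : Fin n → Fin 4, A v p q := by
          exact Finset.sum_congr rfl fun p _ => Finset.sum_congr rfl fun q _ => key p q
      _ = ∑ p : Fin (2 ^ n) × (Fin n → Fin 2), ∑ v : Fin n → Fin 4,
            ∑ q : Fin (2 ^ n) × (Fin n → Fin 2), A v p q :=
          Finset.sum_congr rfl fun p _ => Finset.sum_comm
      _ = ∑ v : Fin n → Fin 4, ∑ p : Fin (2 ^ n) × (Fin n → Fin 2),
            ∑ q : Fin (2 ^ n) × (Fin n → Fin 2), A v p q := Finset.sum_comm
      _ = ∑ v : Fin n → Fin 4, ((2:ℂ) ^ n)⁻¹ * (((d v : ℝ) : ℂ) * T v) := by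
          refine Finset.sum_congr rfl fun v _ => ?_
          rw [hTdef, hAdef]
          simp only [Finset.mul_sum]
      _ = ∑ v : Fin n → Fin 4, ((∏ k, pauliSign (w k) (v k) : ℝ) : ℂ) * ((d v : ℝ) : ℂ) := by
          refine Finset.sum_congr rfl fun v _ => ?_
          rw [hT v]
          field_simp
      _ = ((∑ v : Fin n → Fin 4, (∏ k, pauliSign (w k) (v k)) * d v : ℝ) : ℂ) := by
          norm_cast
  rw [hQ] at hq
  have hfin : (0:ℝ) ≤ ∑ v : Fin n → Fin 4, (∏ k, pauliSign (w k) (v k)) * d v := by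
    exact_mod_cast hq
  have h4 : (0:ℝ) ≤ (4:ℝ) ^ n := by positivity
  exact div_nonneg hfin h4

end StmtAux

theorem stmt_7 (n : ℕ) (hn : 1 ≤ n)
    (d : (Fin n → Fin 4) → ℝ) (hd : d (fun _ => 0) = 1)
    (Φ : Matrix (Fin n → Fin 2) (Fin n → Fin 2) ℂ →ₗ[ℂ]
         Matrix (Fin n → Fin 2) (Fin n → Fin 2) ℂ)
    (hΦ : ∀ v : Fin n → Fin 4, Φ (pauliTensor v) = d v • pauliTensor v) :
    CompletelyPositive Φ ↔
      ∀ w : Fin n → Fin 4,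
        0 ≤ (∑ v : Fin n → Fin 4, (∏ k, pauliSign (w k) (v k)) * d v) / 4 ^ n := by
  constructor
  · intro hCP w
    exact StmtAux.fwd d Φ hΦ hCP w
  · intro h
    exact StmtAux.rev d Φ hΦ (fun w => h w)
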